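/- A positive integer k not divisible by 4 and all of whose odd prime divisors are congruent to 1 or 3 modulo 8 is primitively represented by the quadratic form 2X² + Y², i.e., there exist coprime integers x, y with k = 2x² + y². -/

import Mathlib

/-- Balanced residue: `x.bmod m` is congruent to `x` and satisfies `4*(x.bmod m)^2 ≤ m^2`. -/
lemma bmod_sq_le (x : ℤ) (m : ℕ) (hm : 0 < m) : 4 * (x.bmod m) ^ 2 ≤ (m : ℤ) ^ 2 := by
  have h1 : -((m : ℤ) / 2) ≤ x.bmod m := Int.le_bmod hm
  have h2 : x.bmod m < ((m : ℤ) + 1) / 2 := Int.bmod_lt hm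
  have hb : -(m : ℤ) ≤ 2 * x.bmod m ∧ 2 * x.bmod m ≤ (m : ℤ) := by omega
  nlinarith [hb.1, hb.2]

lemma dvd_sub_bmod (x : ℤ) (m : ℕ) : (m : ℤ) ∣ x - x.bmod m := by
  have h : x.bmod m ≡ x [ZMOD (m : ℤ)] := Int.bmod_emod
  exact h.dvd

/-- Fermat descent for the form `x² + 2y²`. -/
lemma descent (p : ℕ) (hp : p.Prime) (m : ℕ) : 0 < m → m < p →
    ∀ a b : ℤ, a ^ 2 + 2 * b ^ 2 = m * p → ∃ x y : ℤ, x ^ 2 + 2 * y ^ 2 = (p : ℤ) := by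
  induction m using Nat.strong_induction_on with
  | _ m IH =>
    intro hm hmp a b hab
    rcases eq_or_lt_of_le (show 1 ≤ m from hm) with h1 | h1
    · -- m = 1
      refine ⟨a, b, ?_⟩
      rw [hab, ← h1]; push_cast; ring
    -- m ≥ 2
    have hm2 : 2 ≤ m := h1
    set M : ℤ := (m : ℤ) with hM
    have hMpos : (0 : ℤ) < M := by rw [hM]; exact_mod_cast hm
    obtain ⟨u, hu⟩ := dvd_sub_bmod a m
    obtain ⟨v, hv⟩ := dvd_sub_bmod b m
    set c : ℤ := a.bmod m with hc
    set d : ℤ := b.bmod m with hd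
    have hca : c = a - M * u := by linarith [hu]
    have hdb : d = b - M * v := by linarith [hv]
    have hdvd : M ∣ c ^ 2 + 2 * d ^ 2 := by
      have : c ^ 2 + 2 * d ^ 2 =
          M * ((p : ℤ) - 2 * a * u + M * u ^ 2 - 4 * b * v + 2 * M * v ^ 2) := by
        rw [hca, hdb]; nlinarith [hab]
      exact ⟨_, this⟩
    obtain ⟨m', hm'⟩ := hdvd
    have hnn : 0 ≤ m' := by nlinarith [sq_nonneg c, sq_nonneg d]
    have hbound : 4 * (c ^ 2 + 2 * d ^ 2) ≤ 3 * M ^ 2 := by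
      have h3 := bmod_sq_le a m hm
      have h4 := bmod_sq_le b m hm
      rw [← hc] at h3; rw [← hd] at h4
      nlinarith
    have hm'lt : m' < M := by nlinarith
    rcases eq_or_lt_of_le hnn with h0 | h0
    · -- m' = 0 : contradiction
      exfalso
      have hsum : c ^ 2 + 2 * d ^ 2 = 0 := by rw [hm', ← h0]; ring
      have hc1 : c = 0 := by
        have h5 := sq_nonneg c
        have h6 := sq_nonneg d
        have : c ^ 2 = 0 := by linarith
        exact pow_eq_zero_iff two_ne_zero |>.mp this
      have hd1 : d = 0 := by
        have h5 := sq_nonneg c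
        have h6 := sq_nonneg d
        have : d ^ 2 = 0 := by linarith
        exact pow_eq_zero_iff two_ne_zero |>.mp this
      have ha' : a = M * u := by rw [hc1] at hca; linarith [hca]
      have hb' : b = M * v := by rw [hd1] at hdb; linarith [hdb]
      have : M * (M * (u ^ 2 + 2 * v ^ 2)) = M * (p : ℤ) := by
        rw [← hab, ha', hb']; ring
      have hMp : M ∣ (p : ℤ) := by
        have := mul_left_cancel₀ (ne_of_gt hMpos) this
        exact ⟨_, this.symm⟩
      rw [hM] at hMp
      have hmp' : m ∣ p := by exact_mod_cast hMp
      rcases (Nat.Prime.eq_one_or_self_of_dvd hp m hmp') with h | h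
      · omega
      · omega
    -- descent step
    set e : ℤ := (p : ℤ) - a * u - 2 * b * v with he
    set f : ℤ := b * u - a * v with hf
    have heq1 : a * c + 2 * b * d = M * e := by
      rw [hca, hdb, he]; linear_combination hab
    have heq2 : a * d - b * c = M * f := by rw [hca, hdb, hf]; ring
    have hkey : M ^ 2 * (e ^ 2 + 2 * f ^ 2) = M ^ 2 * (m' * (p : ℤ)) := by
      have : (a * c + 2 * b * d) ^ 2 + 2 * (a * d - b * c) ^ 2
          = (a ^ 2 + 2 * b ^ 2) * (c ^ 2 + 2 * d ^ 2) := by ring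
      rw [heq1, heq2, hab, hm'] at this
      linear_combination this
    have hef : e ^ 2 + 2 * f ^ 2 = m' * (p : ℤ) :=
      mul_left_cancel₀ (pow_ne_zero 2 (ne_of_gt hMpos)) hkey
    have hm'nat : m' = ((m'.toNat : ℕ) : ℤ) := (Int.toNat_of_nonneg hnn).symm
    refine IH m'.toNat ?_ ?_ ?_ e f ?_
    · omega
    · omega
    · omega
    · rw [hef, ← hm'nat]

/-- A prime `p ≡ 1, 3 (mod 8)` is primitively represented by `x² + 2y²`. -/
lemma prime_rep (p : ℕ) (hp : p.Prime) (h8 : p % 8 = 1 ∨ p % 8 = 3) :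
    ∃ x y : ℤ, IsCoprime x y ∧ (p : ℤ) = x ^ 2 + 2 * y ^ 2 := by
  haveI : Fact p.Prime := ⟨hp⟩
  have hp2 : p ≠ 2 := by omega
  have hp3 : 3 ≤ p := by
    have := hp.two_le; omega
  obtain ⟨r, hr⟩ := (ZMod.exists_sq_eq_neg_two_iff hp2).mpr h8
  -- get a0 with p ∣ a0² + 2
  set a0 : ℤ := (r.val : ℤ) with ha0
  have hdvd0 : (p : ℤ) ∣ a0 ^ 2 + 2 := by
    rw [← ZMod.intCast_zmod_eq_zero_iff_dvd, ha0]
    push_cast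
    rw [ZMod.natCast_zmod_val, pow_two, ← hr]
    ring
  set a : ℤ := a0.bmod p with ha
  have hdvd : (p : ℤ) ∣ a ^ 2 + 2 := by
    obtain ⟨w, hw⟩ := dvd_sub_bmod a0 p
    have haw : a = a0 - (p : ℤ) * w := by omega
    obtain ⟨s, hs⟩ := hdvd0
    refine ⟨s - 2 * a0 * w + (p : ℤ) * w ^ 2, ?_⟩
    rw [haw]; nlinarith [hs]
  obtain ⟨m', hm'⟩ := hdvd
  have hppos : (0 : ℤ) < (p : ℤ) := by exact_mod_cast hp.pos
  have hm'pos : 0 < m' := by nlinarith [sq_nonneg a]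
  have hsq : 4 * a ^ 2 ≤ (p : ℤ) ^ 2 := by
    have := bmod_sq_le a0 p hp.pos; rw [← ha] at this; exact this
  have hm'lt : m' < (p : ℤ) := by nlinarith
  obtain ⟨x, y, hxy⟩ := descent p hp m'.toNat
    (by omega) (by omega) a 1
    (by
      rw [show ((m'.toNat : ℕ) : ℤ) = m' from Int.toNat_of_nonneg (le_of_lt hm'pos)]
      rw [mul_comm]
      nlinarith [hm'])
  refine ⟨x, y, ?_, hxy.symm⟩
  -- coprimality from primality
  rw [Int.isCoprime_iff_gcd_eq_one]
  by_contra hg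
  set g : ℕ := Int.gcd x y with hgdef
  have hgx : (g : ℤ) ∣ x := Int.gcd_dvd_left x y
  have hgy : (g : ℤ) ∣ y := Int.gcd_dvd_right x y
  have hg2 : (g : ℤ) ^ 2 ∣ (p : ℤ) := by
    rw [← hxy]
    obtain ⟨x', hx'⟩ := hgx
    obtain ⟨y', hy'⟩ := hgy
    exact ⟨x' ^ 2 + 2 * y' ^ 2, by rw [hx', hy']; ring⟩
  have hg2' : g ^ 2 ∣ p := by exact_mod_cast hg2
  have hgd : g ∣ p := dvd_trans (dvd_pow_self g two_ne_zero) hg2'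
  rcases hp.eq_one_or_self_of_dvd g hgd with h | h
  · exact hg h
  · rw [h] at hg2'
    have := Nat.le_of_dvd hp.pos hg2'
    nlinarith [hp.two_le]

/-- Composition step keeping primitivity: `m` odd times an odd prime `p`. -/
lemma combine (p : ℕ) (hp : p.Prime) (hp2 : p ≠ 2) (m : ℤ) (hmodd : Odd m) (hmpos : 0 < m)
    (a b c d : ℤ) (hab : IsCoprime a b) (hcd : IsCoprime c d)
    (h1 : m = a ^ 2 + 2 * b ^ 2) (h2 : (p : ℤ) = c ^ 2 + 2 * d ^ 2) :
    ∃ x y : ℤ, IsCoprime x y ∧ m * (p : ℤ) = x ^ 2 + 2 * y ^ 2 := by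
  have hPprime : Prime ((p : ℤ)) := Nat.prime_iff_prime_int.mp hp
  have hpodd : Odd ((p : ℤ)) := by
    rw [Int.odd_coe_nat]
    exact hp.odd_of_ne_two hp2
  have hmp_odd : Odd (m * (p : ℤ)) := hmodd.mul hpodd
  set u : ℤ := a * c + 2 * b * d with hu
  set v : ℤ := a * d - b * c with hv
  set u' : ℤ := a * c - 2 * b * d with hu'
  set v' : ℤ := a * d + b * c with hv'
  have key1 : m * (p : ℤ) = u ^ 2 + 2 * v ^ 2 := by rw [h1, h2, hu, hv]; ring
  have key2 : m * (p : ℤ) = u' ^ 2 + 2 * v' ^ 2 := by rw [h1, h2, hu', hv']; ring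
  -- a common prime divisor of a pair must be p
  have main : ∀ U V : ℤ, (U = u ∧ V = v) ∨ (U = u' ∧ V = v') →
      ¬ IsCoprime U V → (p : ℤ) ∣ U ∧ (p : ℤ) ∣ V := by
    intro U V hUV hnc
    have hUVeq : m * (p : ℤ) = U ^ 2 + 2 * V ^ 2 := by
      rcases hUV with ⟨hU, hV⟩ | ⟨hU, hV⟩ <;> rw [hU, hV] <;> [exact key1; exact key2]
    have hgne : Int.gcd U V ≠ 1 := by
      intro h; exact hnc (Int.isCoprime_iff_gcd_eq_one.mpr h)
    have hgne0 : Int.gcd U V ≠ 0 := by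
      intro h
      have hU0 : U = 0 := by
        have := Int.gcd_eq_zero_iff.mp h; exact this.1
      have hV0 : V = 0 := (Int.gcd_eq_zero_iff.mp h).2
      rw [hU0, hV0] at hUVeq
      have : m * (p : ℤ) = 0 := by rw [hUVeq]; ring
      have hpp : (0 : ℤ) < (p : ℤ) := by exact_mod_cast hp.pos
      nlinarith
    obtain ⟨q, hq, hqd⟩ := Nat.exists_prime_and_dvd hgne
    have hqU : (q : ℤ) ∣ U := dvd_trans (Int.natCast_dvd_natCast.mpr hqd) (Int.gcd_dvd_left U V)
    have hqV : (q : ℤ) ∣ V := dvd_trans (Int.natCast_dvd_natCast.mpr hqd) (Int.gcd_dvd_right U V)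
    have hqP : Prime ((q : ℤ)) := Nat.prime_iff_prime_int.mp hq
    -- q is odd
    have hq2 : q ≠ 2 := by
      intro h
      rw [h] at hqU
      have : (2 : ℤ) ∣ m * (p : ℤ) := by
        rw [hUVeq]
        obtain ⟨U', hU'⟩ := hqU
        push_cast at hU'
        exact ⟨2 * U' ^ 2 + V ^ 2, by rw [hU']; ring⟩
      rw [← Int.not_even_iff_odd, even_iff_two_dvd] at hmp_odd
      exact hmp_odd this
    -- identities: q ∣ a*p and q ∣ b*p
    have hap : (q : ℤ) ∣ a * (p : ℤ) := by
      have hid : a * (p : ℤ) = c * U + 2 * d * V := by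
        rcases hUV with ⟨hU, hV⟩ | ⟨hU, hV⟩
        · rw [hU, hV, h2, hu, hv]; ring
        · rw [hU, hV, h2, hu', hv']; ring
      rw [hid]
      exact dvd_add (Dvd.dvd.mul_left hqU c) (Dvd.dvd.mul_left hqV (2 * d))
    have hbp : (q : ℤ) ∣ b * (p : ℤ) := by
      have hdvd' : (q : ℤ) ∣ d * U - c * V :=
        dvd_sub (Dvd.dvd.mul_left hqU d) (Dvd.dvd.mul_left hqV c)
      rcases hUV with ⟨hU, hV⟩ | ⟨hU, hV⟩
      · have hid : b * (p : ℤ) = d * U - c * V := by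
          rw [hU, hV, h2, hu, hv]; ring
        rw [hid]; exact hdvd'
      · have hid : b * (p : ℤ) = -(d * U - c * V) := by
          rw [hU, hV, h2, hu', hv']
          ring
        rw [hid]; exact hdvd'.neg_right
    have hqp : q = p := by
      rcases hqP.dvd_mul.mp hap with ha' | hp'
      · rcases hqP.dvd_mul.mp hbp with hb' | hp'
        · exfalso
          have := hab.isUnit_of_dvd' ha' hb'
          rw [Int.isUnit_iff] at this
          rcases this with h | h <;>
            · have : q = 1 := by exact_mod_cast (by omega : (q:ℤ) = 1)
              exact hq.one_lt.ne' this
        · exact (Nat.prime_dvd_prime_iff_eq hq hp).mp (Int.natCast_dvd_natCast.mp hp')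
      · exact (Nat.prime_dvd_prime_iff_eq hq hp).mp (Int.natCast_dvd_natCast.mp hp')
    rw [hqp] at hqU hqV
    exact ⟨hqU, hqV⟩
  by_cases huv : IsCoprime u v
  · exact ⟨u, v, huv, key1⟩
  by_cases huv' : IsCoprime u' v'
  · exact ⟨u', v', huv', key2⟩
  exfalso
  obtain ⟨hpu, hpv⟩ := main u v (Or.inl ⟨rfl, rfl⟩) huv
  obtain ⟨hpu', hpv'⟩ := main u' v' (Or.inr ⟨rfl, rfl⟩) huv'
  have hP2 : ¬ ((p : ℤ) ∣ 2) := by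
    intro h
    have hd : p ∣ 2 := by exact_mod_cast h
    rcases (Nat.dvd_prime Nat.prime_two).mp hd with h' | h'
    · exact hp.one_lt.ne' h'
    · exact hp2 h'
  have hPac : (p : ℤ) ∣ a * c := by
    have h' : (p : ℤ) ∣ 2 * (a * c) := by
      have : 2 * (a * c) = u + u' := by rw [hu, hu']; ring
      rw [this]; exact dvd_add hpu hpu'
    rcases hPprime.dvd_mul.mp h' with h | h
    · exact absurd h hP2
    · exact h
  have hPbd : (p : ℤ) ∣ b * d := by
    have h' : (p : ℤ) ∣ 2 * (2 * (b * d)) := by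
      have : 2 * (2 * (b * d)) = u - u' := by rw [hu, hu']; ring
      rw [this]; exact dvd_sub hpu hpu'
    rcases hPprime.dvd_mul.mp h' with h | h
    · exact absurd h hP2
    rcases hPprime.dvd_mul.mp h with h | h
    · exact absurd h hP2
    · exact h
  have hPad : (p : ℤ) ∣ a * d := by
    have h' : (p : ℤ) ∣ 2 * (a * d) := by
      have : 2 * (a * d) = v + v' := by rw [hv, hv']; ring
      rw [this]; exact dvd_add hpv hpv'
    rcases hPprime.dvd_mul.mp h' with h | h
    · exact absurd h hP2
    · exact h
  have hPbc : (p : ℤ) ∣ b * c := by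
    have h' : (p : ℤ) ∣ 2 * (b * c) := by
      have : 2 * (b * c) = v' - v := by rw [hv, hv']; ring
      rw [this]; exact dvd_sub hpv' hpv
    rcases hPprime.dvd_mul.mp h' with h | h
    · exact absurd h hP2
    · exact h
  have hnotunit : ¬ IsUnit ((p : ℤ)) := hPprime.not_unit
  rcases hPprime.dvd_mul.mp hPac with hA | hC
  · rcases hPprime.dvd_mul.mp hPbc with hB | hC
    · exact hnotunit (hab.isUnit_of_dvd' hA hB)
    · rcases hPprime.dvd_mul.mp hPbd with hB | hD
      · exact hnotunit (hab.isUnit_of_dvd' hA hB)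
      · exact hnotunit (hcd.isUnit_of_dvd' hC hD)
  · rcases hPprime.dvd_mul.mp hPbd with hB | hD
    · rcases hPprime.dvd_mul.mp hPad with hA | hD
      · exact hnotunit (hab.isUnit_of_dvd' hA hB)
      · exact hnotunit (hcd.isUnit_of_dvd' hC hD)
    · exact hnotunit (hcd.isUnit_of_dvd' hC hD)

/-- Odd `m` with all prime divisors ≡ 1, 3 (mod 8) is primitively represented. -/
lemma odd_rep (m : ℕ) : Odd m → (∀ p : ℕ, p.Prime → p ∣ m → p % 8 = 1 ∨ p % 8 = 3) →
    ∃ x y : ℤ, IsCoprime x y ∧ (m : ℤ) = x ^ 2 + 2 * y ^ 2 := by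
  induction m using Nat.strong_induction_on with
  | _ m IH =>
    intro hodd hdivs
    have hm0 : m ≠ 0 := by rintro rfl; simp [Nat.odd_iff] at hodd
    by_cases hm1 : m = 1
    · exact ⟨1, 0, isCoprime_one_left, by rw [hm1]; norm_num⟩
    · set p := m.minFac with hpdef
      have hp : p.Prime := Nat.minFac_prime hm1
      have hpm : p ∣ m := Nat.minFac_dvd m
      have h8 : p % 8 = 1 ∨ p % 8 = 3 := hdivs p hp hpm
      have hp2 : p ≠ 2 := by omega
      obtain ⟨n, hn⟩ := hpm
      have hn0 : n ≠ 0 := by rintro rfl; simp at hn; exact hm0 hn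
      have hnlt : n < m := by
        rw [hn]
        have := hp.two_le
        nlinarith [Nat.pos_of_ne_zero hn0]
      have hnodd : Odd n := by
        rcases Nat.even_or_odd n with he | ho
        · exact absurd (hn ▸ (he.mul_left p)) (Nat.not_even_iff_odd.mpr hodd)
        · exact ho
      obtain ⟨a, b, hab, habm⟩ := IH n hnlt hnodd
        (fun q hq hqn => hdivs q hq (hqn.trans ⟨p, by rw [hn]; ring⟩))
      obtain ⟨c, d, hcd, hcdp⟩ := prime_rep p hp h8
      have hnodd' : Odd ((n : ℤ)) := (Int.odd_coe_nat n).mpr hnodd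
      have hnpos : (0 : ℤ) < (n : ℤ) := by exact_mod_cast Nat.pos_of_ne_zero hn0
      obtain ⟨x, y, hxy, hrep⟩ := combine p hp hp2 (n : ℤ) hnodd' hnpos a b c d hab hcd habm hcdp
      refine ⟨x, y, hxy, ?_⟩
      rw [← hrep, hn]
      push_cast
      ring

theorem primitively_represented_by_two_sq_add_sq (k : ℕ) (hk : 0 < k) (h4 : ¬ (4 ∣ k))
    (hp : ∀ p : ℕ, p.Prime → Odd p → p ∣ k → p % 8 = 1 ∨ p % 8 = 3) :
    ∃ x y : ℤ, IsCoprime x y ∧ (k : ℤ) = 2 * x ^ 2 + y ^ 2 := by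
  rcases Nat.even_or_odd k with hke | hko
  · -- k = 2 * n with n odd
    obtain ⟨n, hn⟩ := hke
    have hn' : k = 2 * n := by omega
    have hnodd : Odd n := by
      rcases Nat.even_or_odd n with he | ho
      · exfalso; apply h4; obtain ⟨t, ht⟩ := he; exact ⟨t, by omega⟩
      · exact ho
    obtain ⟨a, b, hab, habn⟩ := odd_rep n hnodd (fun q hq hqn => by
      refine hp q hq ?_ (hqn.trans ⟨2, by omega⟩)
      rcases hq.eq_two_or_odd' with h | h
      · exfalso
        rw [h] at hqn
        rw [Nat.odd_iff] at hnodd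
        obtain ⟨t, ht⟩ := hqn
        omega
      · exact h)
    -- a is odd since n = a² + 2b² is odd
    have haodd : Odd a := by
      by_contra hae
      rw [Int.not_odd_iff_even] at hae
      obtain ⟨t, ht⟩ := hae
      have : Even ((n : ℤ)) := by
        rw [habn, ht]
        exact ⟨2 * t ^ 2 + b ^ 2, by ring⟩
      rw [Int.even_coe_nat, Nat.even_iff] at this
      rw [Nat.odd_iff] at hnodd
      omega
    have ha2 : IsCoprime a 2 := by
      rw [Int.isCoprime_iff_gcd_eq_one, Int.gcd]
      have h2 := Int.natAbs_odd.mpr haodd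
      have hd2 : a.natAbs.gcd 2 ∣ 2 := Nat.gcd_dvd_right _ _
      have hd1 : a.natAbs.gcd 2 ∣ a.natAbs := Nat.gcd_dvd_left _ _
      rcases (Nat.dvd_prime Nat.prime_two).mp hd2 with h | h
      · exact h
      · exfalso; rw [h] at hd1; rw [Nat.odd_iff] at h2
        obtain ⟨t, ht⟩ := hd1; omega
    refine ⟨a, 2 * b, ha2.mul_right hab, ?_⟩
    rw [hn']
    push_cast
    rw [habn]
    ring
  · obtain ⟨x, y, hxy, hrep⟩ := odd_rep k hko (fun q hq hqk => by
      refine hp q hq ?_ hqk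
      rcases hq.eq_two_or_odd' with h | h
      · exfalso
        rw [h] at hqk
        rw [Nat.odd_iff] at hko
        omega
      · exact h)
    exact ⟨y, x, hxy.symm, by rw [hrep]; ring⟩
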